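/- Let H ∈ ℝ^{n×n} be symmetric with smallest eigenvalue α₀ satisfying α₀ > ν²/4, where ν > 0. Then the block matrix P = [[2I, νI], [νI, 2H]] is symmetric positive definite, and moreover P ≥ ηI where η = 1 + α₀ - √((α₀+1)² - (4α₀ - ν²)) > 0. -/

import Mathlib

open Matrix

lemma aux_quad_nonneg (c d ν A B S : ℝ) (hc : 0 ≤ c) (hd : 0 ≤ d) (hν : 0 ≤ ν)
    (hcd : c * d = ν ^ 2) (hA : 0 ≤ A) (hB : 0 ≤ B) (hS : S ^ 2 ≤ A * B) :
    0 ≤ c * A + 2 * ν * S + d * B := by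
  have hX : 0 ≤ c * A + d * B := add_nonneg (mul_nonneg hc hA) (mul_nonneg hd hB)
  have hY2 : (2 * ν * S) ^ 2 ≤ (c * A + d * B) ^ 2 := by
    nlinarith [sq_nonneg (c * A - d * B), mul_le_mul_of_nonneg_left hS
      (by positivity : (0:ℝ) ≤ 4 * ν ^ 2), mul_nonneg hA hB]
  have := (abs_le_of_sq_le_sq' hY2 hX).1
  linarith

lemma aux_posSemidef_sub (n : ℕ) (H : Matrix (Fin n) (Fin n) ℝ) (hH : H.IsHermitian) (α₀ : ℝ)
    (hlb : ∀ i, α₀ ≤ hH.eigenvalues i) : (H - α₀ • 1).PosSemidef := by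
  have h1 : (diagonal (fun i => hH.eigenvalues i - α₀)).PosSemidef :=
    PosSemidef.diagonal (fun i => sub_nonneg.2 (hlb i))
  have h2 := h1.mul_mul_conjTranspose_same (hH.eigenvectorUnitary : Matrix (Fin n) (Fin n) ℝ)
  have hU : (hH.eigenvectorUnitary : Matrix (Fin n) (Fin n) ℝ) *
      (star (hH.eigenvectorUnitary : Matrix (Fin n) (Fin n) ℝ)) = 1 :=
    Matrix.mem_unitaryGroup_iff.mp hH.eigenvectorUnitary.2
  have key : H - α₀ • 1 = (hH.eigenvectorUnitary : Matrix (Fin n) (Fin n) ℝ) *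
      diagonal (fun i => hH.eigenvalues i - α₀) *
      ((hH.eigenvectorUnitary : Matrix (Fin n) (Fin n) ℝ))ᴴ := by
    have hd : diagonal (fun i => hH.eigenvalues i - α₀)
        = diagonal (RCLike.ofReal ∘ hH.eigenvalues) - α₀ • 1 := by
      ext i j
      rcases eq_or_ne i j with rfl | h
      · simp
      · simp [Matrix.diagonal_apply_ne _ h, Matrix.one_apply_ne h]
    rw [hd, mul_sub, sub_mul]
    rw [Matrix.mul_smul, Matrix.smul_mul, Matrix.mul_one]
    have hct : ((hH.eigenvectorUnitary : Matrix (Fin n) (Fin n) ℝ))ᴴ =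
        star (hH.eigenvectorUnitary : Matrix (Fin n) (Fin n) ℝ) := rfl
    rw [hct, hU]
    exact congrArg (· - α₀ • 1) hH.spectral_theorem
  rw [key]
  exact h2

theorem stmt2 (n : ℕ) (H : Matrix (Fin n) (Fin n) ℝ) (hH : H.IsHermitian) (ν α₀ : ℝ)
    (hν : 0 < ν) (hlb : ∀ i, α₀ ≤ hH.eigenvalues i) (hmin : ∃ i, hH.eigenvalues i = α₀)
    (hα : ν ^ 2 / 4 < α₀) :
    (Matrix.fromBlocks ((2 : ℝ) • (1 : Matrix (Fin n) (Fin n) ℝ)) (ν • 1) (ν • 1)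
        ((2 : ℝ) • H)).PosDef ∧
    0 < 1 + α₀ - Real.sqrt ((α₀ + 1) ^ 2 - (4 * α₀ - ν ^ 2)) ∧
    (Matrix.fromBlocks ((2 : ℝ) • (1 : Matrix (Fin n) (Fin n) ℝ)) (ν • 1) (ν • 1)
        ((2 : ℝ) • H) -
      (1 + α₀ - Real.sqrt ((α₀ + 1) ^ 2 - (4 * α₀ - ν ^ 2))) • 1).PosSemidef := by
  set s : ℝ := Real.sqrt ((α₀ + 1) ^ 2 - (4 * α₀ - ν ^ 2)) with hs_def
  set η : ℝ := 1 + α₀ - s with hη_def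
  have hα0 : 0 < α₀ := lt_of_le_of_lt (by positivity) hα
  have hinner : (α₀ + 1) ^ 2 - (4 * α₀ - ν ^ 2) = (α₀ - 1) ^ 2 + ν ^ 2 := by ring
  have hs_nonneg : 0 ≤ s := Real.sqrt_nonneg _
  have hs_sq : s ^ 2 = (α₀ - 1) ^ 2 + ν ^ 2 := by
    rw [hs_def, Real.sq_sqrt (by nlinarith)]
    exact hinner
  have hs_gt : |α₀ - 1| < s := by
    rw [← Real.sqrt_sq_eq_abs, hs_def, hinner]
    exact Real.sqrt_lt_sqrt (sq_nonneg _) (by nlinarith)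
  have hc : 0 < 2 - η := by
    rw [hη_def]; nlinarith [hs_gt, le_abs_self (α₀ - 1)]
  have hd : 0 < 2 * α₀ - η := by
    rw [hη_def]; nlinarith [hs_gt, neg_abs_le (α₀ - 1)]
  have hη_pos : 0 < η := by
    rw [hη_def]
    have hlt : s < 1 + α₀ := by
      rw [hs_def, show (1:ℝ) + α₀ = Real.sqrt ((1 + α₀)^2) from
        (Real.sqrt_sq (by nlinarith)).symm]
      exact Real.sqrt_lt_sqrt (by nlinarith) (by nlinarith)
    linarith
  have hcd : (2 - η) * (2 * α₀ - η) = ν ^ 2 := by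
    rw [hη_def]; nlinarith [hs_sq]
  have hHps := aux_posSemidef_sub n H hH α₀ hlb
  have hone : (1 : Matrix (Fin n) (Fin n) ℝ).IsHermitian := isHermitian_one
  have hsmul : ∀ {m : Type} [Fintype m] [DecidableEq m] (c : ℝ) (M : Matrix m m ℝ),
      M.IsHermitian → (c • M).IsHermitian := by
    intro m _ _ c M hM
    show (c • M)ᴴ = c • M
    rw [conjTranspose_smul, star_trivial, hM.eq]
  have hblock : (Matrix.fromBlocks ((2 : ℝ) • (1 : Matrix (Fin n) (Fin n) ℝ)) (ν • 1) (ν • 1)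
      ((2 : ℝ) • H)).IsHermitian :=
    isHermitian_fromBlocks_iff.mpr ⟨hsmul 2 1 hone, (hsmul ν 1 hone).eq,
      (hsmul ν 1 hone).eq, hsmul 2 H hH⟩
  have hquad : ∀ x : (Fin n) ⊕ (Fin n) → ℝ,
      η * (x ⬝ᵥ x) ≤ x ⬝ᵥ ((Matrix.fromBlocks ((2 : ℝ) • (1 : Matrix (Fin n) (Fin n) ℝ)) (ν • 1)
        (ν • 1) ((2 : ℝ) • H)) *ᵥ x) := by
    intro x
    set u : Fin n → ℝ := x ∘ Sum.inl with hu
    set v : Fin n → ℝ := x ∘ Sum.inr with hv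
    have hxx : x ⬝ᵥ x = u ⬝ᵥ u + v ⬝ᵥ v := dotProduct_block x x
    have hMx : x ⬝ᵥ ((Matrix.fromBlocks ((2 : ℝ) • (1 : Matrix (Fin n) (Fin n) ℝ)) (ν • 1)
        (ν • 1) ((2 : ℝ) • H)) *ᵥ x)
        = 2 * (u ⬝ᵥ u) + 2 * ν * (u ⬝ᵥ v) + 2 * (v ⬝ᵥ (H *ᵥ v)) := by
      rw [fromBlocks_mulVec, dotProduct_block]
      simp only [Sum.elim_comp_inl, Sum.elim_comp_inr, smul_mulVec, one_mulVec,
        dotProduct_add, dotProduct_smul, smul_eq_mul, ← hu, ← hv]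
      rw [dotProduct_comm v u]
      ring
    have hQ : α₀ * (v ⬝ᵥ v) ≤ v ⬝ᵥ (H *ᵥ v) := by
      have h0 := hHps.dotProduct_mulVec_nonneg v
      simp only [star_trivial, sub_mulVec, dotProduct_sub, smul_mulVec, one_mulVec,
        dotProduct_smul, smul_eq_mul] at h0
      linarith
    have hA : 0 ≤ u ⬝ᵥ u := (dotProduct_star_self_nonneg u : 0 ≤ star u ⬝ᵥ u).trans_eq (by simp)
    have hB : 0 ≤ v ⬝ᵥ v := (dotProduct_star_self_nonneg v : 0 ≤ star v ⬝ᵥ v).trans_eq (by simp)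
    have hCS : (u ⬝ᵥ v) ^ 2 ≤ (u ⬝ᵥ u) * (v ⬝ᵥ v) := by
      simpa [dotProduct, pow_two, mul_comm] using
        Finset.sum_mul_sq_le_sq_mul_sq Finset.univ u v
    have key := aux_quad_nonneg (2 - η) (2 * α₀ - η) ν (u ⬝ᵥ u) (v ⬝ᵥ v) (u ⬝ᵥ v)
      hc.le hd.le hν.le hcd hA hB hCS
    rw [hxx, hMx]
    linarith
  have hPS : (Matrix.fromBlocks ((2 : ℝ) • (1 : Matrix (Fin n) (Fin n) ℝ)) (ν • 1) (ν • 1)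
        ((2 : ℝ) • H) - η • 1).PosSemidef := by
    refine .of_dotProduct_mulVec_nonneg (hblock.sub (hsmul η 1 isHermitian_one)) fun x => ?_
    simp only [star_trivial, sub_mulVec, dotProduct_sub, smul_mulVec, one_mulVec,
      dotProduct_smul, smul_eq_mul]
    linarith [hquad x]
  refine ⟨?_, hη_pos, hPS⟩
  have heq : Matrix.fromBlocks ((2 : ℝ) • (1 : Matrix (Fin n) (Fin n) ℝ)) (ν • 1) (ν • 1)
      ((2 : ℝ) • H)
      = (Matrix.fromBlocks ((2 : ℝ) • (1 : Matrix (Fin n) (Fin n) ℝ)) (ν • 1) (ν • 1)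
        ((2 : ℝ) • H) - η • 1) + η • 1 := by abel
  rw [heq]
  have hηI : (η • (1 : Matrix ((Fin n) ⊕ (Fin n)) ((Fin n) ⊕ (Fin n)) ℝ)).PosDef := by
    have hde : (η • (1 : Matrix ((Fin n) ⊕ (Fin n)) ((Fin n) ⊕ (Fin n)) ℝ))
        = diagonal (fun _ => η) := by
      ext i j
      rcases eq_or_ne i j with rfl | h
      · simp
      · simp [Matrix.diagonal_apply_ne _ h, Matrix.one_apply_ne h]
    rw [hde]
    exact Matrix.PosDef.diagonal (fun _ => hη_pos)
  exact Matrix.PosDef.posSemidef_add hPS hηI
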